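/- Let T be an invertible N×N matrix over a field, partitioned as a 2×2 block matrix [[A, B], [C, D]] with A of size ν₁×μ₁, B of size ν₁×μ₂, C of size ν₂×μ₁, D of size ν₂×μ₂, and let its inverse be partitioned compatibly as [[P, Q], [R, S]] with P of size μ₁×ν₁ and R of size μ₂×ν₁. Then dim ker C = dim ker R (equivalently, ν₂ − rank C = μ₂ − rank R, where nullity is of the linear maps given by C and R). -/
import Mathlib


/-- Nullity theorem (Gustafson): for an invertible block 2×2 matrix
`T = [[A,B],[C,D]]` with inverse `[[P,Q],[R,S]]`, the nullity of the
lower-left block `C` equals the nullity of the lower-left block `R`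
of the inverse. -/
theorem nullity_theorem {F : Type*} [Field F] {ν₁ ν₂ μ₁ μ₂ : ℕ}
    (A : Matrix (Fin ν₁) (Fin μ₁) F) (B : Matrix (Fin ν₁) (Fin μ₂) F)
    (C : Matrix (Fin ν₂) (Fin μ₁) F) (D : Matrix (Fin ν₂) (Fin μ₂) F)
    (P : Matrix (Fin μ₁) (Fin ν₁) F) (Q : Matrix (Fin μ₁) (Fin ν₂) F)
    (R : Matrix (Fin μ₂) (Fin ν₁) F) (S : Matrix (Fin μ₂) (Fin ν₂) F)
    (h1 : Matrix.fromBlocks A B C D * Matrix.fromBlocks P Q R S = 1)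
    (h2 : Matrix.fromBlocks P Q R S * Matrix.fromBlocks A B C D = 1) :
    Module.finrank F (LinearMap.ker C.mulVecLin) =
      Module.finrank F (LinearMap.ker R.mulVecLin) := by
  -- extract the block identities
  rw [Matrix.fromBlocks_multiply] at h1 h2
  have hAP : A * P + B * R = 1 := by
    ext i j
    have := congrFun (congrFun h1 (Sum.inl i)) (Sum.inl j)
    simpa [Matrix.one_apply] using this
  have hCP : C * P + D * R = 0 := by
    ext i j
    have := congrFun (congrFun h1 (Sum.inr i)) (Sum.inl j)
    simpa [Matrix.one_apply] using this
  have hPA : P * A + Q * C = 1 := by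
    ext i j
    have := congrFun (congrFun h2 (Sum.inl i)) (Sum.inl j)
    simpa [Matrix.one_apply] using this
  have hRA : R * A + S * C = 0 := by
    ext i j
    have := congrFun (congrFun h2 (Sum.inr i)) (Sum.inl j)
    simpa [Matrix.one_apply] using this
  -- key pointwise identities
  have hf : ∀ x : Fin μ₁ → F, C.mulVec x = 0 → R.mulVec (A.mulVec x) = 0 := by
    intro x hx
    have h := congrArg (fun M => M.mulVec x) hRA
    simpa [Matrix.add_mulVec, ← Matrix.mulVec_mulVec, hx] using h
  have hg : ∀ y : Fin ν₁ → F, R.mulVec y = 0 → C.mulVec (P.mulVec y) = 0 := by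
    intro y hy
    have h := congrArg (fun M => M.mulVec y) hCP
    simpa [Matrix.add_mulVec, ← Matrix.mulVec_mulVec, hy] using h
  have key1 : ∀ x : Fin μ₁ → F, C.mulVec x = 0 → P.mulVec (A.mulVec x) = x := by
    intro x hx
    have h := congrArg (fun M => M.mulVec x) hPA
    simpa [Matrix.add_mulVec, ← Matrix.mulVec_mulVec, hx] using h
  have key2 : ∀ y : Fin ν₁ → F, R.mulVec y = 0 → A.mulVec (P.mulVec y) = y := by
    intro y hy
    have h := congrArg (fun M => M.mulVec y) hAP
    simpa [Matrix.add_mulVec, ← Matrix.mulVec_mulVec, hy] using h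
  let f : LinearMap.ker C.mulVecLin →ₗ[F] LinearMap.ker R.mulVecLin :=
    (A.mulVecLin.comp (LinearMap.ker C.mulVecLin).subtype).codRestrict _
      (fun x => by
        have hx : C.mulVec x.1 = 0 := x.2
        simpa [LinearMap.mem_ker, Matrix.mulVecLin_apply] using hf x.1 hx)
  let g : LinearMap.ker R.mulVecLin →ₗ[F] LinearMap.ker C.mulVecLin :=
    (P.mulVecLin.comp (LinearMap.ker R.mulVecLin).subtype).codRestrict _
      (fun y => by
        have hy : R.mulVec y.1 = 0 := y.2
        simpa [LinearMap.mem_ker, Matrix.mulVecLin_apply] using hg y.1 hy)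
  have hgf : ∀ x : LinearMap.ker C.mulVecLin, g (f x) = x := by
    rintro ⟨x, hx⟩
    have hx' : C.mulVec x = 0 := hx
    apply Subtype.ext
    simpa [f, g, Matrix.mulVecLin_apply] using key1 x hx'
  have hfg : ∀ y : LinearMap.ker R.mulVecLin, f (g y) = y := by
    rintro ⟨y, hy⟩
    have hy' : R.mulVec y = 0 := hy
    apply Subtype.ext
    simpa [f, g, Matrix.mulVecLin_apply] using key2 y hy'
  exact LinearEquiv.finrank_eq
    { toFun := f, map_add' := f.map_add, map_smul' := f.map_smul,
      invFun := g, left_inv := hgf, right_inv := hfg }
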